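/- arXiv:1904.00920 — 2 statements merged into one kernel-verified Lean document; each statement's English description precedes it below -/
import Mathlib

section
/- Let (f_k)_{k=1}^K be a balanced frame for H with dual frame (g̃_k)_{k=1}^K (i.e., f = ∑_k ⟨f, f_k⟩ g̃_k for all f). Then for each index l, the family (f_k)_{k≠l} together with (g̃_k − g̃_l)_{k≠l} satisfies f = ∑_{k≠l} ⟨f, f_k⟩ (g̃_k − g̃_l) for all f ∈ H. In particular, removing any single element from a balanced frame still leaves a spanning family. -/
open Finset

theorem balanced_frame_one_erasure
    {𝕜 E : Type*} [RCLike 𝕜] [NormedAddCommGroup E] [InnerProductSpace 𝕜 E]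
    [FiniteDimensional 𝕜 E] {K : ℕ} (f g : Fin K → E)
    (hframe : Submodule.span 𝕜 (Set.range f) = ⊤)
    (hbal : (∑ k, f k) = 0)
    (hdual : ∀ x : E, ∑ k, (inner 𝕜 (f k) x : 𝕜) • g k = x) :
    ∀ l : Fin K,
      (∀ x : E, ∑ k ∈ Finset.univ.erase l, (inner 𝕜 (f k) x : 𝕜) • (g k - g l) = x) ∧
      Submodule.span 𝕜 (f '' {k | k ≠ l}) = ⊤ := by
  intro l
  have hsum0 : ∀ x : E, ∑ k, (inner 𝕜 (f k) x : 𝕜) = 0 := by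
    intro x
    rw [← sum_inner, hbal, inner_zero_left]
  have hrec : ∀ x : E,
      ∑ k ∈ Finset.univ.erase l, (inner 𝕜 (f k) x : 𝕜) • (g k - g l) = x := by
    intro x
    have h1 : ∑ k ∈ Finset.univ.erase l, (inner 𝕜 (f k) x : 𝕜)
        = - (inner 𝕜 (f l) x : 𝕜) := by
      have := hsum0 x
      rw [← Finset.add_sum_erase _ _ (Finset.mem_univ l)] at this
      linear_combination this
    calc ∑ k ∈ Finset.univ.erase l, (inner 𝕜 (f k) x : 𝕜) • (g k - g l)
        = (∑ k ∈ Finset.univ.erase l, (inner 𝕜 (f k) x : 𝕜) • g k)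
          - (∑ k ∈ Finset.univ.erase l, (inner 𝕜 (f k) x : 𝕜)) • g l := by
          rw [Finset.sum_smul]
          rw [← Finset.sum_sub_distrib]
          exact Finset.sum_congr rfl fun k _ => smul_sub _ _ _
      _ = (∑ k ∈ Finset.univ.erase l, (inner 𝕜 (f k) x : 𝕜) • g k)
          + (inner 𝕜 (f l) x : 𝕜) • g l := by rw [h1, neg_smul, sub_neg_eq_add]
      _ = ∑ k, (inner 𝕜 (f k) x : 𝕜) • g k := by
          rw [add_comm]
          exact Finset.add_sum_erase _ (fun k => (inner 𝕜 (f k) x : 𝕜) • g k)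
            (Finset.mem_univ l)
      _ = x := hdual x
  refine ⟨hrec, ?_⟩
  rw [← Submodule.orthogonal_eq_bot_iff]
  rw [Submodule.eq_bot_iff]
  intro x hx
  have hperp : ∀ k, k ≠ l → (inner 𝕜 (f k) x : 𝕜) = 0 := by
    intro k hk
    exact (Submodule.mem_orthogonal _ x).mp hx (f k)
      (Submodule.subset_span ⟨k, hk, rfl⟩)
  have := hrec x
  rw [Finset.sum_eq_zero (fun k hk => by
    rw [hperp k (Finset.ne_of_mem_erase hk), zero_smul])] at this
  exact this.symm
end

section
/- Let (f_k)_{k=1}^K be a frame for H and (g̃_k)_{k=1}^K a dual frame. Suppose there exists l with g̃_l ≠ 0 such that f = ∑_{k≠l} ⟨f, g̃_k − g̃_l⟩ f_k for all f ∈ H. Then ∑_{k=1}^K f_k = 0. -/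
open Finset

theorem erased_dual_implies_balanced
    {𝕜 E : Type*} [RCLike 𝕜] [NormedAddCommGroup E] [InnerProductSpace 𝕜 E]
    [FiniteDimensional 𝕜 E] {K : ℕ} (f g : Fin K → E)
    (hframe : Submodule.span 𝕜 (Set.range f) = ⊤)
    (hdual : ∀ x : E, ∑ k, (inner 𝕜 (g k) x : 𝕜) • f k = x)
    (l : Fin K) (hl : g l ≠ 0)
    (h : ∀ x : E, ∑ k ∈ Finset.univ.erase l, (inner 𝕜 (g k - g l) x : 𝕜) • f k = x) :
    (∑ k, f k) = 0 := by
  set c : 𝕜 := inner 𝕜 (g l) (g l) with hc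
  have h1 := hdual (g l)
  have h2 := h (g l)
  have key : c • ∑ k, f k = 0 := by
    have hsplit : (∑ k, (inner 𝕜 (g k) (g l) : 𝕜) • f k)
        = (inner 𝕜 (g l) (g l) : 𝕜) • f l
          + ∑ k ∈ Finset.univ.erase l, (inner 𝕜 (g k) (g l) : 𝕜) • f k := by
      rw [← Finset.add_sum_erase _ _ (Finset.mem_univ l)]
    have hsub : ∀ k, (inner 𝕜 (g k - g l) (g l) : 𝕜) • f k
        = (inner 𝕜 (g k) (g l) : 𝕜) • f k - c • f k := by
      intro k; rw [inner_sub_left, sub_smul]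
    rw [Finset.sum_congr rfl (fun k _ => hsub k)] at h2
    rw [Finset.sum_sub_distrib] at h2
    have := sub_eq_zero.mpr (h2.trans h1.symm)
    rw [hsplit] at this
    rw [Finset.smul_sum, ← Finset.add_sum_erase _ _ (Finset.mem_univ l)]
    linear_combination (norm := (simp only [hc]; abel_nf)) -this
  rcases smul_eq_zero.mp key with hc0 | hs
  · exact absurd hc0 (inner_self_ne_zero.mpr hl)
  · exact hs
end
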